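/- Let ℓ : E → E₁ and m : E → E₂ be linear maps with ker m ⊆ ker ℓ, and let ω be a skew-symmetric bilinear form on E with E = ker ℓ ⊕ (ker ℓ)^⊥ and E = ker m ⊕ (ker m)^⊥, such that the restrictions ℓ|_{(ker ℓ)^⊥} and m|_{(ker m)^⊥} are bijections onto E₁ and E₂. Let ω₁, ω₂ be the induced forms on E₁, E₂ (i.e., ωᵢ(pᵢ u, pᵢ v) = ω(u,v) on the respective orthogonals). If π : E₂ → E₁ is the unique linear map with π ∘ m = ℓ, then ω₂(u₂, v₂) restricted to m((ker ℓ)^⊥) equals ω₁(π u₂, π v₂); i.e., π*ω₁ = ω₂ on m((ker ℓ)^⊥). -/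

import Mathlib

/-- The ω-orthogonal of a subspace `K`: `{x | ∀ y ∈ K, ω x y = 0}`. -/
def sympOrth {E : Type*} [AddCommGroup E] [Module ℝ E]
    (ω : E →ₗ[ℝ] E →ₗ[ℝ] ℝ) (K : Submodule ℝ E) : Submodule ℝ E where
  carrier := {x | ∀ y ∈ K, ω x y = 0}
  add_mem' := by
    intro a b ha hb y hy
    simp [ha y hy, hb y hy]
  zero_mem' := by
    intro y hy
    simp
  smul_mem' := by
    intro c a ha y hy
    simp [ha y hy]

/-- Compatibility of induced forms: if ker m ⊆ ker ℓ, ω₁ and ω₂ are the forms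
induced by ω via ℓ and m on E₁ and E₂, and π is the unique map with π ∘ m = ℓ,
then π*ω₁ = ω₂ on m((ker ℓ)^⊥). -/
theorem stmt12 {E E₁ E₂ : Type*}
    [AddCommGroup E] [Module ℝ E] [AddCommGroup E₁] [Module ℝ E₁]
    [AddCommGroup E₂] [Module ℝ E₂]
    (ω : E →ₗ[ℝ] E →ₗ[ℝ] ℝ) (hskew : ∀ u v : E, ω u v = - ω v u)
    (ℓ : E →ₗ[ℝ] E₁) (m : E →ₗ[ℝ] E₂)
    (hker : LinearMap.ker m ≤ LinearMap.ker ℓ)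
    (hcompl₁ : IsCompl (LinearMap.ker ℓ) (sympOrth ω (LinearMap.ker ℓ)))
    (hcompl₂ : IsCompl (LinearMap.ker m) (sympOrth ω (LinearMap.ker m)))
    (hbij₁ : Function.Bijective (ℓ.domRestrict (sympOrth ω (LinearMap.ker ℓ))))
    (hbij₂ : Function.Bijective (m.domRestrict (sympOrth ω (LinearMap.ker m))))
    (ω₁ : E₁ →ₗ[ℝ] E₁ →ₗ[ℝ] ℝ) (ω₂ : E₂ →ₗ[ℝ] E₂ →ₗ[ℝ] ℝ)
    (hω₁ : ∀ u ∈ sympOrth ω (LinearMap.ker ℓ), ∀ v ∈ sympOrth ω (LinearMap.ker ℓ),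
      ω₁ (ℓ u) (ℓ v) = ω u v)
    (hω₂ : ∀ u ∈ sympOrth ω (LinearMap.ker m), ∀ v ∈ sympOrth ω (LinearMap.ker m),
      ω₂ (m u) (m v) = ω u v)
    (π : E₂ →ₗ[ℝ] E₁) (hπ : π.comp m = ℓ) :
    ∀ u ∈ sympOrth ω (LinearMap.ker ℓ), ∀ v ∈ sympOrth ω (LinearMap.ker ℓ),
      ω₂ (m u) (m v) = ω₁ (π (m u)) (π (m v)) := by
  intro u hu v hv
  obtain ⟨u₀, u', hu₀, hu', huu⟩ :=
    Submodule.codisjoint_iff_exists_add_eq.mp hcompl₂.codisjoint u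
  obtain ⟨v₀, v', hv₀, hv', hvv⟩ :=
    Submodule.codisjoint_iff_exists_add_eq.mp hcompl₂.codisjoint v
  have hmu : m u = m u' := by
    rw [← huu]; simp [LinearMap.mem_ker.mp hu₀]
  have hmv : m v = m v' := by
    rw [← hvv]; simp [LinearMap.mem_ker.mp hv₀]
  have hπm : ∀ x : E, π (m x) = ℓ x := fun x => by rw [← hπ]; rfl
  have key : ω u' v' = ω u v := by
    have h1 : ω u₀ v = 0 := by
      have := hv u₀ (hker hu₀)
      rw [hskew]; simp [this]
    have h2 : ω u' v₀ = 0 := hu' v₀ hv₀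
    calc ω u' v' = ω u₀ v + ω u' v' := by rw [h1]; ring
      _ = ω u₀ v + (ω u' v₀ + ω u' v') := by rw [h2]; ring
      _ = ω u₀ v + ω u' (v₀ + v') := by rw [map_add]
      _ = ω (u₀ + u') v := by rw [hvv, map_add, LinearMap.add_apply]
      _ = ω u v := by rw [huu]
  calc ω₂ (m u) (m v) = ω₂ (m u') (m v') := by rw [hmu, hmv]
    _ = ω u' v' := hω₂ u' hu' v' hv'
    _ = ω u v := key
    _ = ω₁ (ℓ u) (ℓ v) := (hω₁ u hu v hv).symm
    _ = ω₁ (π (m u)) (π (m v)) := by rw [hπm, hπm]
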